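/- Let L > 0, M > 0, and set Q̄ := [0,L] × [0,M]. For a function g : [0,L] → [0,M] define A_g := {(x₁, x₂) ∈ Q̄ : g(x₁) ≤ x₂}. Let h_k : [0,L] → [0,M] be lower semicontinuous functions such that the compact sets A_{h_k} converge, with respect to the Hausdorff distance, to a compact set A ⊆ Q̄. Define h : [0,L] → [0,M] by h(x) := inf{ liminf_{k→∞} h_k(x_k) : x_k ∈ [0,L], x_k → x }. Then h is lower semicontinuous and A = A_h. -/

import Mathlib

open Filter
open scoped ENNReal NNReal Topology

/-- The region `A_g = {(x₁,x₂) ∈ [0,L]×[0,M] : g(x₁) ≤ x₂}` above the graph of `g`. -/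
def aboveGraph (L M : ℝ) (g : ℝ → ℝ) : Set (ℝ × ℝ) :=
  {p : ℝ × ℝ | p.1 ∈ Set.Icc 0 L ∧ p.2 ∈ Set.Icc 0 M ∧ g p.1 ≤ p.2}

/-- Let `h_k : [0,L] → [0,M]` be lower semicontinuous with `A_{h_k} → A` in the
Hausdorff distance, `A ⊆ [0,L]×[0,M]` compact.  Define
`h(x) = inf{ liminf_k h_k(x_k) : x_k → x }`.  Then `h` maps `[0,L]` into `[0,M]`,
is lower semicontinuous, and `A = A_h`. -/
theorem stmt17 (L M : ℝ) (hL : 0 < L) (hM : 0 < M)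
    (hk : ℕ → ℝ → ℝ)
    (hmap : ∀ k, ∀ x ∈ Set.Icc (0 : ℝ) L, hk k x ∈ Set.Icc (0 : ℝ) M)
    (hlsc : ∀ k, LowerSemicontinuousOn (hk k) (Set.Icc 0 L))
    (A : Set (ℝ × ℝ)) (hA : IsCompact A)
    (hAsub : A ⊆ Set.Icc (0 : ℝ) L ×ˢ Set.Icc (0 : ℝ) M)
    (hconv : Tendsto (fun k => EMetric.hausdorffEdist (aboveGraph L M (hk k)) A)
      atTop (nhds 0)) :
    let h : ℝ → ℝ := fun x => sInf {l : ℝ | ∃ xs : ℕ → ℝ,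
      (∀ k, xs k ∈ Set.Icc (0 : ℝ) L) ∧ Tendsto xs atTop (nhds x) ∧
        l = liminf (fun k => hk k (xs k)) atTop}
    (∀ x ∈ Set.Icc (0 : ℝ) L, h x ∈ Set.Icc (0 : ℝ) M) ∧
      LowerSemicontinuousOn h (Set.Icc 0 L) ∧ A = aboveGraph L M h := by
  intro h
  set Sset : ℝ → Set ℝ := fun x => {l : ℝ | ∃ xs : ℕ → ℝ,
      (∀ k, xs k ∈ Set.Icc (0 : ℝ) L) ∧ Tendsto xs atTop (nhds x) ∧
        l = liminf (fun k => hk k (xs k)) atTop} with hSset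
  have hval : ∀ x, h x = sInf (Sset x) := fun _ => rfl
  -- boundedness facts
  have hub : ∀ xs : ℕ → ℝ, (∀ k, xs k ∈ Set.Icc (0 : ℝ) L) →
      IsBoundedUnder (· ≤ ·) atTop (fun k => hk k (xs k)) :=
    fun xs hxs => ⟨M, eventually_map.mpr (Eventually.of_forall fun k => (hmap k _ (hxs k)).2)⟩
  have hlb : ∀ xs : ℕ → ℝ, (∀ k, xs k ∈ Set.Icc (0 : ℝ) L) →
      IsBoundedUnder (· ≥ ·) atTop (fun k => hk k (xs k)) :=
    fun xs hxs => ⟨0, eventually_map.mpr (Eventually.of_forall fun k => (hmap k _ (hxs k)).1)⟩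
  have hlimmem : ∀ xs : ℕ → ℝ, (∀ k, xs k ∈ Set.Icc (0 : ℝ) L) →
      liminf (fun k => hk k (xs k)) atTop ∈ Set.Icc (0 : ℝ) M := by
    intro xs hxs
    constructor
    · exact le_liminf_of_le ((hub xs hxs).isCoboundedUnder_ge)
        (Eventually.of_forall fun k => (hmap k _ (hxs k)).1)
    · refine liminf_le_of_le (hlb xs hxs) fun b hb => ?_
      obtain ⟨n, hn⟩ := hb.exists
      exact hn.trans (hmap n _ (hxs n)).2
  have hSne : ∀ x ∈ Set.Icc (0 : ℝ) L, (Sset x).Nonempty := by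
    intro x hx
    exact ⟨_, ⟨fun _ => x, fun _ => hx, tendsto_const_nhds, rfl⟩⟩
  have hbdd : ∀ x, BddBelow (Sset x) := by
    intro x
    refine ⟨0, fun l hl => ?_⟩
    obtain ⟨xs, hxs, -, rfl⟩ := hl
    exact (hlimmem xs hxs).1
  have hmem : ∀ x ∈ Set.Icc (0 : ℝ) L, h x ∈ Set.Icc (0 : ℝ) M := by
    intro x hx
    rw [hval]
    constructor
    · refine le_csInf (hSne x hx) fun l hl => ?_
      obtain ⟨xs, hxs, -, rfl⟩ := hl
      exact (hlimmem xs hxs).1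
    · refine (csInf_le (hbdd x) ⟨fun _ => x, fun _ => hx, tendsto_const_nhds, rfl⟩).trans ?_
      exact (hlimmem (fun _ => x) (fun _ => hx)).2
  have hle : ∀ x (xs : ℕ → ℝ), (∀ k, xs k ∈ Set.Icc (0 : ℝ) L) →
      Tendsto xs atTop (nhds x) → h x ≤ liminf (fun k => hk k (xs k)) atTop := by
    intro x xs h1 h2
    rw [hval]
    exact csInf_le (hbdd x) ⟨xs, h1, h2, rfl⟩
  have hAkmem : ∀ k, ((0 : ℝ), M) ∈ aboveGraph L M (hk k) := by
    intro k
    exact ⟨⟨le_rfl, hL.le⟩, ⟨hM.le, le_rfl⟩, (hmap k 0 ⟨le_rfl, hL.le⟩).2⟩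
  have hconv' : ∀ ε : ℝ≥0∞, 0 < ε →
      ∀ᶠ k in atTop, EMetric.hausdorffEdist (aboveGraph L M (hk k)) A ≤ ε :=
    ENNReal.tendsto_nhds_zero.mp hconv
  -- Main equality
  have hAeq : A = aboveGraph L M h := by
    apply Set.Subset.antisymm
    · rintro ⟨x, t⟩ hpA
      have hx : x ∈ Set.Icc (0 : ℝ) L := (hAsub hpA).1
      have ht : t ∈ Set.Icc (0 : ℝ) M := (hAsub hpA).2
      refine ⟨hx, ht, ?_⟩
      have hq : ∀ k : ℕ, ∃ q ∈ aboveGraph L M (hk k),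
          edist (x, t) q ≤ EMetric.hausdorffEdist (aboveGraph L M (hk k)) A
            + ((k : ℝ≥0∞) + 1)⁻¹ := by
        intro k
        have h1 : EMetric.infEdist (x, t) (aboveGraph L M (hk k)) ≠ ⊤ :=
          ((EMetric.infEdist_le_edist_of_mem (hAkmem k)).trans_lt (edist_lt_top _ _)).ne
        have h2 : EMetric.infEdist (x, t) (aboveGraph L M (hk k))
            < EMetric.infEdist (x, t) (aboveGraph L M (hk k)) + ((k : ℝ≥0∞) + 1)⁻¹ :=
          ENNReal.lt_add_right h1 (by simp)
        obtain ⟨q, hq1, hq2⟩ := EMetric.infEdist_lt_iff.mp h2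
        refine ⟨q, hq1, hq2.le.trans (add_le_add ?_ le_rfl)⟩
        refine le_of_le_of_eq ?_ EMetric.hausdorffEdist_comm
        exact EMetric.infEdist_le_hausdorffEdist_of_mem hpA
      choose q hq1 hq2 using hq
      have hinv : Tendsto (fun k : ℕ => ((k : ℝ≥0∞) + 1)⁻¹) atTop (𝓝 0) := by
        have h0 := ENNReal.tendsto_inv_nat_nhds_zero.comp (tendsto_add_atTop_nat 1)
        have heq : ((fun n : ℕ => ((n : ℝ≥0∞))⁻¹) ∘ fun a => a + 1)
            = fun k : ℕ => ((k : ℝ≥0∞) + 1)⁻¹ := by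
          funext k; simp [Function.comp]
        rwa [heq] at h0
      have hupper : Tendsto (fun k => EMetric.hausdorffEdist (aboveGraph L M (hk k)) A
          + ((k : ℝ≥0∞) + 1)⁻¹) atTop (𝓝 0) := by
        have := hconv.add hinv
        simpa using this
      have hedist : Tendsto (fun k => edist (x, t) (q k)) atTop (𝓝 0) :=
        tendsto_of_tendsto_of_tendsto_of_le_of_le tendsto_const_nhds hupper
          (fun k => zero_le) hq2
      have hqt : Tendsto q atTop (𝓝 (x, t)) := by
        rw [EMetric.tendsto_atTop]
        intro ε hε
        have := hedist.eventually_lt_const hε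
        simpa [edist_comm] using this
      have hfst : Tendsto (fun k => (q k).1) atTop (𝓝 x) :=
        (continuous_fst.tendsto _).comp hqt
      have hsnd : Tendsto (fun k => (q k).2) atTop (𝓝 t) :=
        (continuous_snd.tendsto _).comp hqt
      calc h x ≤ liminf (fun k => hk k ((q k).1)) atTop :=
            hle x _ (fun k => (hq1 k).1) hfst
        _ ≤ liminf (fun k => (q k).2) atTop := by
            refine liminf_le_liminf (Eventually.of_forall fun k => (hq1 k).2.2)
              (hlb _ fun k => (hq1 k).1) ?_
            exact IsBoundedUnder.isCoboundedUnder_ge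
              ⟨M, eventually_map.mpr (Eventually.of_forall fun k => (hq1 k).2.1.2)⟩
        _ = t := hsnd.liminf_eq
    · rintro ⟨x, t⟩ ⟨hx, ht, hxt⟩
      rw [EMetric.mem_iff_infEdist_zero_of_closed hA.isClosed]
      refine le_antisymm ?_ zero_le
      refine ENNReal.le_of_forall_pos_le_add fun ε hε _ => ?_
      set δ : ℝ := (ε : ℝ) / 2 with hδdef
      have hδ : 0 < δ := by positivity
      have hsinf : sInf (Sset x) < t + δ := by
        rw [← hval]; linarith [hxt]
      obtain ⟨l, hlmem, hlt⟩ := exists_lt_of_csInf_lt (hSne x hx) hsinf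
      obtain ⟨xs, hxs, hxst, rfl⟩ := hlmem
      have freq : ∃ᶠ k in atTop, hk k (xs k) < t + δ :=
        frequently_lt_of_liminf_lt ((hub xs hxs).isCoboundedUnder_ge) hlt
      have ev1' : ∀ᶠ k in atTop, dist (xs k) x < δ :=
        eventually_atTop.mpr (Metric.tendsto_atTop.mp hxst δ hδ)
      have ev2 : ∀ᶠ k in atTop, EMetric.hausdorffEdist (aboveGraph L M (hk k)) A
          ≤ ENNReal.ofReal δ := hconv' _ (ENNReal.ofReal_pos.mpr hδ)
      obtain ⟨k, h1k, h2k, h3k⟩ := (freq.and_eventually (ev1'.and ev2)).exists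
      set s : ℝ := max t (hk k (xs k)) with hsdef
      have hqmem : (xs k, s) ∈ aboveGraph L M (hk k) := by
        refine ⟨hxs k, ⟨le_max_of_le_left ht.1, max_le ht.2 (hmap k _ (hxs k)).2⟩,
          le_max_right _ _⟩
      have hdistq : dist (x, t) (xs k, s) < δ := by
        rw [Prod.dist_eq]
        refine max_lt ?_ ?_
        · rw [dist_comm]; exact h2k
        · rw [Real.dist_eq, abs_sub_lt_iff]
          constructor
          · have : t ≤ s := le_max_left _ _
            linarith
          · have : s < t + δ := max_lt (by linarith) h1k
            linarith
      have hedq : edist (x, t) (xs k, s) ≤ ENNReal.ofReal δ := by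
        rw [edist_dist]
        exact ENNReal.ofReal_le_ofReal hdistq.le
      calc EMetric.infEdist (x, t) A
          ≤ EMetric.infEdist (x, t) (aboveGraph L M (hk k))
            + EMetric.hausdorffEdist (aboveGraph L M (hk k)) A :=
            EMetric.infEdist_le_infEdist_add_hausdorffEdist
        _ ≤ ENNReal.ofReal δ + ENNReal.ofReal δ :=
            add_le_add ((EMetric.infEdist_le_edist_of_mem hqmem).trans hedq) h3k
        _ = ENNReal.ofReal (δ + δ) := (ENNReal.ofReal_add hδ.le hδ.le).symm
        _ ≤ 0 + (ε : ℝ≥0∞) := by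
            rw [zero_add, hδdef]
            rw [show (ε : ℝ) / 2 + (ε : ℝ) / 2 = (ε : ℝ) by ring]
            simp [ENNReal.ofReal_coe_nnreal]
  -- lower semicontinuity from closedness of A
  have hlscpart : LowerSemicontinuousOn h (Set.Icc 0 L) := by
    intro x hx y hy
    by_contra hcon
    rw [Filter.not_eventually] at hcon
    have hcon' : ∃ᶠ x' in nhdsWithin x (Set.Icc 0 L),
        x' ∈ Set.Icc (0 : ℝ) L ∧ h x' ≤ y :=
      (hcon.and_eventually self_mem_nhdsWithin).mono fun x' ⟨h1, h2⟩ => ⟨h2, not_lt.mp h1⟩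
    rcases lt_or_ge y 0 with hy0 | hy0
    · obtain ⟨x', hx'1, hx'2⟩ := hcon'.exists
      exact absurd hx'2 (not_le.mpr (lt_of_lt_of_le hy0 (hmem x' hx'1).1))
    · have hyM : y ≤ M := (hy.trans_le (hmem x hx).2).le
      have hxcl : x ∈ closure {x' | x' ∈ Set.Icc (0 : ℝ) L ∧ h x' ≤ y} :=
        mem_closure_iff_frequently.mpr (hcon'.filter_mono nhdsWithin_le_nhds)
      have hmapcl : (x, y) ∈ closure ((fun x' => (x', y)) ''
          {x' | x' ∈ Set.Icc (0 : ℝ) L ∧ h x' ≤ y}) := by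
        have hc : Continuous fun x' : ℝ => (x', y) := continuous_id.prodMk continuous_const
        exact (image_closure_subset_closure_image hc) ⟨x, hxcl, rfl⟩
      have himg : (fun x' => (x', y)) '' {x' | x' ∈ Set.Icc (0 : ℝ) L ∧ h x' ≤ y} ⊆ A := by
        rintro p ⟨x', ⟨hx'1, hx'2⟩, rfl⟩
        rw [hAeq]
        exact ⟨hx'1, ⟨hy0, hyM⟩, hx'2⟩
      have : (x, y) ∈ A := hA.isClosed.closure_subset ((closure_mono himg).trans
        (by rw [hA.isClosed.closure_eq]) hmapcl)
      rw [hAeq] at this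
      exact absurd this.2.2 (not_le.mpr hy)
  exact ⟨hmem, hlscpart, hAeq⟩
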